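/- Define u : ℝ × [0,1) → ℝ by u(x,t) = (exp(x+t−1) − 1)·𝟙_{{x+t>1}} + (exp(−x+t−1) − 1)·𝟙_{{−x+t>1}}. Then for every t ∈ [0,1): (a) the sets {x : x+t > 1} and {x : −x+t > 1} are disjoint and u(·,t) ≥ 0 with {x : u(x,t) > 0} = {x : x > 1−t} ∪ {x : x < t−1}; (b) u is C^∞ on the open set {(x,t) : u(x,t) > 0, 0 < t < 1} and satisfies the heat equation ∂ₓₓu − ∂ₜu = 0 there; and (c) at each free boundary point, i.e. for x₀ = 1−t or x₀ = −(1−t) with t ∈ (0,1), the limit of |∂ₓu(x,t)| as (x,t) → (x₀,t) from within {u>0} equals 1. -/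
import Mathlib


open Set Filter Topology

noncomputable section

namespace ParabolicBernoulli

/-- The two colliding traveling waves
`u(x,t) = 𝟙_{x+t>1}(exp(x+t-1)-1) + 𝟙_{-x+t>1}(exp(-x+t-1)-1)`. -/
def uEx : ℝ × ℝ → ℝ := fun p =>
  (if 1 < p.1 + p.2 then Real.exp (p.1 + p.2 - 1) - 1 else 0) +
    (if 1 < -p.1 + p.2 then Real.exp (-p.1 + p.2 - 1) - 1 else 0)

/-- The open region where `u > 0` and `0 < t < 1`. -/
def DEx : Set (ℝ × ℝ) := {p : ℝ × ℝ | 0 < uEx p ∧ 0 < p.2 ∧ p.2 < 1}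

/-! Auxiliary material -/

/-- right wave -/
def gp : ℝ × ℝ → ℝ := fun q => Real.exp (q.1 + q.2 - 1) - 1
/-- left wave -/
def gm : ℝ × ℝ → ℝ := fun q => Real.exp (-q.1 + q.2 - 1) - 1
/-- region of the right wave -/
def Vp : Set (ℝ × ℝ) := {q : ℝ × ℝ | 1 < q.1 + q.2 ∧ q.2 < 1}
/-- region of the left wave -/
def Vm : Set (ℝ × ℝ) := {q : ℝ × ℝ | 1 < -q.1 + q.2 ∧ q.2 < 1}

def Lp : ℝ × ℝ →L[ℝ] ℝ := ContinuousLinearMap.fst ℝ ℝ ℝ + ContinuousLinearMap.snd ℝ ℝ ℝ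
def Lm : ℝ × ℝ →L[ℝ] ℝ := -ContinuousLinearMap.fst ℝ ℝ ℝ + ContinuousLinearMap.snd ℝ ℝ ℝ

lemma isOpen_Vp : IsOpen Vp :=
  (isOpen_lt continuous_const (continuous_fst.add continuous_snd)).inter
    (isOpen_lt continuous_snd continuous_const)

lemma isOpen_Vm : IsOpen Vm :=
  (isOpen_lt continuous_const ((continuous_fst.neg).add continuous_snd)).inter
    (isOpen_lt continuous_snd continuous_const)

lemma uEx_eq_gp {q : ℝ × ℝ} (hq : q ∈ Vp) : uEx q = gp q := by
  obtain ⟨h1, h2⟩ := hq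
  have h3 : ¬ (1 < -q.1 + q.2) := by linarith
  simp [uEx, gp, h1, h3]

lemma uEx_eq_gm {q : ℝ × ℝ} (hq : q ∈ Vm) : uEx q = gm q := by
  obtain ⟨h1, h2⟩ := hq
  have h3 : ¬ (1 < q.1 + q.2) := by linarith
  simp [uEx, gm, h1, h3]

lemma hasFDerivAt_linp (q : ℝ × ℝ) :
    HasFDerivAt (fun q : ℝ × ℝ => q.1 + q.2 - 1) Lp q :=
  (hasFDerivAt_fst.add hasFDerivAt_snd).sub_const 1

lemma hasFDerivAt_linm (q : ℝ × ℝ) :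
    HasFDerivAt (fun q : ℝ × ℝ => -q.1 + q.2 - 1) Lm q :=
  ((hasFDerivAt_fst.neg).add hasFDerivAt_snd).sub_const 1

lemma hasFDerivAt_gp (q : ℝ × ℝ) :
    HasFDerivAt gp (Real.exp (q.1 + q.2 - 1) • Lp) q :=
  ((hasFDerivAt_linp q).exp).sub_const 1

lemma hasFDerivAt_gm (q : ℝ × ℝ) :
    HasFDerivAt gm (Real.exp (-q.1 + q.2 - 1) • Lm) q :=
  ((hasFDerivAt_linm q).exp).sub_const 1

lemma contDiff_gp : ContDiff ℝ (⊤ : ℕ∞) gp :=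
  (Real.contDiff_exp.comp (((contDiff_fst.add contDiff_snd)).sub contDiff_const)).sub
    contDiff_const

lemma contDiff_gm : ContDiff ℝ (⊤ : ℕ∞) gm :=
  (Real.contDiff_exp.comp ((((contDiff_fst.neg).add contDiff_snd)).sub contDiff_const)).sub
    contDiff_const

lemma eq_gp_nhds {p : ℝ × ℝ} (hp : p ∈ Vp) : uEx =ᶠ[𝓝 p] gp :=
  Filter.eventuallyEq_of_mem (isOpen_Vp.mem_nhds hp) (fun _ hq => uEx_eq_gp hq)

lemma eq_gm_nhds {p : ℝ × ℝ} (hp : p ∈ Vm) : uEx =ᶠ[𝓝 p] gm :=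
  Filter.eventuallyEq_of_mem (isOpen_Vm.mem_nhds hp) (fun _ hq => uEx_eq_gm hq)

lemma fderiv_uEx_p {q : ℝ × ℝ} (hq : q ∈ Vp) :
    fderiv ℝ uEx q = Real.exp (q.1 + q.2 - 1) • Lp := by
  rw [(eq_gp_nhds hq).fderiv_eq, (hasFDerivAt_gp q).fderiv]

lemma fderiv_uEx_m {q : ℝ × ℝ} (hq : q ∈ Vm) :
    fderiv ℝ uEx q = Real.exp (-q.1 + q.2 - 1) • Lm := by
  rw [(eq_gm_nhds hq).fderiv_eq, (hasFDerivAt_gm q).fderiv]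

@[simp] lemma Lp_apply (v : ℝ × ℝ) : Lp v = v.1 + v.2 := rfl
@[simp] lemma Lm_apply (v : ℝ × ℝ) : Lm v = -v.1 + v.2 := rfl

lemma mem_Vp_or_Vm {p : ℝ × ℝ} (h : 0 < uEx p) (ht : p.2 < 1) : p ∈ Vp ∨ p ∈ Vm := by
  by_cases h1 : 1 < p.1 + p.2
  · exact Or.inl ⟨h1, ht⟩
  · by_cases h2 : 1 < -p.1 + p.2
    · exact Or.inr ⟨h2, ht⟩
    · exfalso
      simp [uEx, h1, h2] at h

/-- Example: colliding traveling waves: for every `t ∈ [0,1)`,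
(a) `{x+t>1}` and `{-x+t>1}` are disjoint, `u(·,t) ≥ 0` and
`{u(·,t) > 0} = {x > 1-t} ∪ {x < t-1}`; (b) `u` is `C^∞` on `{u>0} ∩ {0<t<1}` and
solves the heat equation `∂ₓₓu - ∂ₜu = 0` there; (c) at each free boundary point
`x₀ = ±(1-t)`, `t ∈ (0,1)`, the limit of `|∂ₓu|` from within `{u>0}` equals `1`. -/
theorem statement12 :
    (∀ t ∈ Set.Ico (0 : ℝ) 1,
      Disjoint {x : ℝ | 1 < x + t} {x : ℝ | 1 < -x + t} ∧
      (∀ x : ℝ, 0 ≤ uEx (x, t)) ∧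
      {x : ℝ | 0 < uEx (x, t)} = {x : ℝ | 1 - t < x} ∪ {x : ℝ | x < t - 1}) ∧
    (ContDiffOn ℝ (⊤ : ℕ∞) uEx DEx ∧
      ∀ p ∈ DEx,
        fderiv ℝ (fun q : ℝ × ℝ => fderiv ℝ uEx q (1, 0)) p (1, 0) -
          fderiv ℝ uEx p (0, 1) = 0) ∧
    (∀ t ∈ Set.Ioo (0 : ℝ) 1, ∀ x₀ : ℝ, (x₀ = 1 - t ∨ x₀ = -(1 - t)) →
      Tendsto (fun p : ℝ × ℝ => |fderiv ℝ uEx p (1, 0)|)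
        (𝓝[{p : ℝ × ℝ | 0 < uEx p ∧ p.2 < 1}] (x₀, t)) (𝓝 1)) := by
  refine ⟨?_, ⟨?_, ?_⟩, ?_⟩
  · -- part (a)
    rintro t ⟨ht0, ht1⟩
    refine ⟨?_, ?_, ?_⟩
    · rw [Set.disjoint_left]
      intro x h1 h2
      simp only [mem_setOf_eq] at h1 h2
      linarith
    · intro x
      have e1 : ∀ z : ℝ, 0 < z → 0 ≤ Real.exp z - 1 := fun z hz => by
        have := Real.one_lt_exp_iff.mpr hz; linarith
      apply add_nonneg <;> [skip; skip] <;> dsimp only <;> split <;>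
        first
          | exact e1 _ (by linarith)
          | exact le_refl 0
    · ext x
      simp only [mem_setOf_eq, mem_union]
      constructor
      · intro hx
        by_contra h
        push_neg at h
        have h1 : ¬ (1 < x + t) := by linarith [h.1]
        have h2 : ¬ (1 < -x + t) := by linarith [h.2]
        simp [uEx, h1, h2] at hx
      · have e1 : ∀ z : ℝ, 0 < z → 0 < Real.exp z - 1 := fun z hz => by
          have := Real.one_lt_exp_iff.mpr hz; linarith
        rintro (h | h)
        · have h1 : 1 < x + t := by linarith
          have h2 : ¬ (1 < -x + t) := by linarith
          have := e1 (x + t - 1) (by linarith)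
          simp only [uEx, h1, h2, if_true, if_false]
          linarith
        · have h1 : ¬ (1 < x + t) := by linarith
          have h2 : 1 < -x + t := by linarith
          have := e1 (-x + t - 1) (by linarith)
          simp only [uEx, h1, h2, if_true, if_false]
          linarith
  · -- part (b1): smoothness
    intro p hp
    rcases mem_Vp_or_Vm hp.1 hp.2.2 with h | h
    · exact ((contDiff_gp.contDiffAt).congr_of_eventuallyEq (eq_gp_nhds h)).contDiffWithinAt
    · exact ((contDiff_gm.contDiffAt).congr_of_eventuallyEq (eq_gm_nhds h)).contDiffWithinAt
  · -- part (b2): heat equation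
    intro p hp
    rcases mem_Vp_or_Vm hp.1 hp.2.2 with h | h
    · have hFx : (fun q : ℝ × ℝ => fderiv ℝ uEx q (1, 0)) =ᶠ[𝓝 p]
          (fun q : ℝ × ℝ => Real.exp (q.1 + q.2 - 1)) := by
        refine Filter.eventuallyEq_of_mem (isOpen_Vp.mem_nhds h) (fun q hq => ?_)
        rw [fderiv_uEx_p hq]
        simp
      have hE : HasFDerivAt (fun q : ℝ × ℝ => Real.exp (q.1 + q.2 - 1))
          (Real.exp (p.1 + p.2 - 1) • Lp) p := (hasFDerivAt_linp p).exp
      rw [hFx.fderiv_eq, hE.fderiv, fderiv_uEx_p h]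
      simp
    · have hFx : (fun q : ℝ × ℝ => fderiv ℝ uEx q (1, 0)) =ᶠ[𝓝 p]
          (fun q : ℝ × ℝ => -Real.exp (-q.1 + q.2 - 1)) := by
        refine Filter.eventuallyEq_of_mem (isOpen_Vm.mem_nhds h) (fun q hq => ?_)
        rw [fderiv_uEx_m hq]
        simp
      have hE : HasFDerivAt (fun q : ℝ × ℝ => -Real.exp (-q.1 + q.2 - 1))
          (-(Real.exp (-p.1 + p.2 - 1) • Lm)) p := ((hasFDerivAt_linm p).exp).neg
      rw [hFx.fderiv_eq, hE.fderiv, fderiv_uEx_m h]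
      simp
  · -- part (c): free boundary condition
    rintro t ⟨ht0, ht1⟩ x₀ hx₀
    set S : Set (ℝ × ℝ) := {p : ℝ × ℝ | 0 < uEx p ∧ p.2 < 1} with hS
    rcases hx₀ with rfl | rfl
    · -- x₀ = 1 - t : right wave
      have hcont : Tendsto (fun q : ℝ × ℝ => Real.exp (q.1 + q.2 - 1))
          (𝓝[S] ((1 - t : ℝ), t)) (𝓝 1) := by
        have h1 : ContinuousAt (fun q : ℝ × ℝ => Real.exp (q.1 + q.2 - 1)) ((1 - t : ℝ), t) :=
          (Real.continuous_exp.comp ((continuous_fst.add continuous_snd).sub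
            continuous_const)).continuousAt
        have := h1.tendsto.mono_left (nhdsWithin_le_nhds (s := S))
        simpa using this
      refine Tendsto.congr' ?_ hcont
      have hU : IsOpen {q : ℝ × ℝ | q.2 - 1 < q.1} :=
        isOpen_lt (continuous_snd.sub continuous_const) continuous_fst
      have hmem : {q : ℝ × ℝ | q.2 - 1 < q.1} ∈ 𝓝[S] ((1 - t : ℝ), t) :=
        mem_nhdsWithin_of_mem_nhds (hU.mem_nhds (by exact show (t:ℝ) - 1 < 1 - t by linarith))
      filter_upwards [hmem, self_mem_nhdsWithin] with q hq hqS
      have hq' : q.2 - 1 < q.1 := hq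
      have h2 : ¬ (1 < -q.1 + q.2) := by linarith
      have h1 : 1 < q.1 + q.2 := by
        by_contra h1
        have := hqS.1
        simp [uEx, h1, h2] at this
      rw [fderiv_uEx_p ⟨h1, hqS.2⟩]
      simp [abs_of_pos (Real.exp_pos _)]
    · -- x₀ = -(1 - t) : left wave
      have hcont : Tendsto (fun q : ℝ × ℝ => Real.exp (-q.1 + q.2 - 1))
          (𝓝[S] ((-(1 - t) : ℝ), t)) (𝓝 1) := by
        have h1 : ContinuousAt (fun q : ℝ × ℝ => Real.exp (-q.1 + q.2 - 1))
            ((-(1 - t) : ℝ), t) :=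
          (Real.continuous_exp.comp (((continuous_fst.neg).add continuous_snd).sub
            continuous_const)).continuousAt
        have := h1.tendsto.mono_left (nhdsWithin_le_nhds (s := S))
        simpa using this
      refine Tendsto.congr' ?_ hcont
      have hU : IsOpen {q : ℝ × ℝ | q.1 + q.2 < 1} :=
        isOpen_lt (continuous_fst.add continuous_snd) continuous_const
      have hmem : {q : ℝ × ℝ | q.1 + q.2 < 1} ∈ 𝓝[S] ((-(1 - t) : ℝ), t) :=
        mem_nhdsWithin_of_mem_nhds (hU.mem_nhds (by exact show (-(1 - t) : ℝ) + t < 1 by linarith))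
      filter_upwards [hmem, self_mem_nhdsWithin] with q hq hqS
      have hq' : q.1 + q.2 < 1 := hq
      have h1 : ¬ (1 < q.1 + q.2) := by linarith
      have h2 : 1 < -q.1 + q.2 := by
        by_contra h2
        have := hqS.1
        simp [uEx, h1, h2] at this
      rw [fderiv_uEx_m ⟨h2, hqS.2⟩]
      simp [abs_of_pos (Real.exp_pos _)]

end ParabolicBernoulli
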